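/- Let S⊆T be a ring extension such that Hom_S(T/S, T)=0 (homomorphisms of left S-modules) and T is injective as a left S-module. Then T is isomorphic as a ring to the left maximal ring of quotients Q_max^l(S) of S, via an isomorphism fixing S. -/

import Mathlib

/-! ### Nonsingularity and maximal left rings of quotients -/

/-- An essential left ideal of `A`: one intersecting every nonzero left ideal
nontrivially. -/
def IsEssentialLeftIdeal (A : Type*) [Ring A] (I : Ideal A) : Prop :=
  ∀ J : Ideal A, J ≠ ⊥ → I ⊓ J ≠ ⊥

/-- A ring is left non-singular if its singular left ideal is zero, i.e. no nonzero
element has an essential left annihilator. -/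
def IsLeftNonsingular (A : Type*) [Ring A] : Prop :=
  ∀ a : A, IsEssentialLeftIdeal A (LinearMap.ker (LinearMap.toSpanSingleton A A a)) → a = 0

/-- `j : S → Q` is a dense (rational) ring extension: `j` is injective and, for every
`S`-submodule `L` of `Q` containing the image of `S`, every `S`-linear map `L → Q`
vanishing on `S` is zero (i.e. `Hom_S(L/S, Q) = 0`). -/
def IsDenseRingExtension {S Q : Type*} [Ring S] [Ring Q] (j : S →+* Q) : Prop :=
  Function.Injective j ∧
  ∀ (L : Set Q), (∀ s : S, j s ∈ L) → (∀ x ∈ L, ∀ y ∈ L, x + y ∈ L) →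
    (∀ s : S, ∀ x ∈ L, j s * x ∈ L) →
    ∀ f : Q → Q,
      (∀ x ∈ L, ∀ y ∈ L, f (x + y) = f x + f y) →
      (∀ s : S, ∀ x ∈ L, f (j s * x) = j s * f x) →
      (∀ s : S, f (j s) = 0) →
      ∀ x ∈ L, f x = 0

universe uq

/-- `j : S → Q` realises `Q` as the maximal left ring of quotients `Q_max^l(S)` of `S`:
it is a dense (rational) extension of `S` in which every dense extension of `S` embeds
over `S`.  This characterises `Q_max^l(S)` (the biendomorphism ring of the injective
hull of `S` as a left `S`-module) up to ring isomorphism fixing `S`. -/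
def IsMaximalLeftQuotientRing {S : Type*} {Q : Type uq} [Ring S] [Ring Q] (j : S →+* Q) :
    Prop :=
  IsDenseRingExtension j ∧
  ∀ (Q' : Type uq) [Ring Q'] (j' : S →+* Q'), IsDenseRingExtension j' →
    ∃ k : Q' →+* Q, k.comp j' = j

/-- Let `S ⊆ T` be a ring extension with `Hom_S(T/S, T) = 0` (every
left `S`-linear map `T → T` vanishing on `S` is zero) such that `T` is injective as a
left `S`-module.  Then `T` is the maximal left ring of quotients of `S` (hence is
isomorphic to `Q_max^l(S)` as a ring, via an isomorphism fixing `S`). -/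
theorem maximal_left_quotient_ring_of_injective
    {T : Type uq} [Ring T] (S : Subring T)
    (hhom : ∀ f : T → T, (∀ x y : T, f (x + y) = f x + f y) →
      (∀ (s : S) (x : T), f ((s : T) * x) = (s : T) * f x) →
      (∀ s : S, f (s : T) = 0) → ∀ x : T, f x = 0)
    (hinj : Module.Injective S T) :
    IsMaximalLeftQuotientRing (S.subtype : S →+* T) := by
  classical
  have hvanish : ∀ (G : T →ₗ[S] T), (∀ s : S, G (s : T) = 0) → ∀ x, G x = 0 := by
    intro G hG
    exact hhom G (fun x y => G.map_add x y) (fun s x => G.map_smul s x) hG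
  constructor
  · refine ⟨Subtype.coe_injective, ?_⟩
    intro L hS hadd hsmul f fadd fsmul fS x hx
    have h0 : (0 : T) ∈ L := by simpa using hS 0
    let L' : Submodule S T :=
      { carrier := L
        add_mem' := fun ha hb => hadd _ ha _ hb
        zero_mem' := h0
        smul_mem' := fun s y hy => hsmul s y hy }
    let f₀ : L' →ₗ[S] T :=
      { toFun := fun y => f y
        map_add' := fun a b => fadd a a.2 b b.2
        map_smul' := fun s a => fsmul s a a.2 }
    obtain ⟨G, hG⟩ := hinj.out L'.subtype (Submodule.injective_subtype L') f₀
    have hGS : ∀ s : S, G (s : T) = 0 := by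
      intro s
      have h1 := hG ⟨(s : T), hS s⟩
      simp only [Submodule.subtype_apply] at h1
      rw [h1]
      exact fS s
    have h2 := hG ⟨x, hx⟩
    simp only [Submodule.subtype_apply] at h2
    have h3 := hvanish G hGS x
    rw [h3] at h2
    exact h2.symm
  · intro Q' _ j' hdense
    letI : Module S Q' := Module.compHom Q' j'
    have smul_def : ∀ (s : S) (q : Q'), s • q = j' s * q := fun _ _ => rfl
    let jlin : S →ₗ[S] Q' :=
      { toFun := fun s => j' s
        map_add' := fun a b => map_add j' a b
        map_smul' := fun s a => by
          show j' (s * a) = j' s * j' a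
          exact map_mul j' s a }
    let ilin : S →ₗ[S] T :=
      { toFun := fun s => (s : T)
        map_add' := fun a b => rfl
        map_smul' := fun s a => rfl }
    obtain ⟨k, hk0⟩ := hinj.out jlin (fun a b hab => hdense.1 hab) ilin
    have hk : ∀ s : S, k (j' s) = (s : T) := fun s => hk0 s
    have huniq : ∀ (s₁ s₂ : S) (x : Q'), k (x - j' s₁) = 0 → k (x - j' s₂) = 0 → s₁ = s₂ := by
      intro s₁ s₂ x h₁ h₂
      have : k (j' s₂ - j' s₁) = 0 := by
        have : (x - j' s₁) - (x - j' s₂) = j' s₂ - j' s₁ := by abel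
        rw [← this, map_sub, h₁, h₂, sub_zero]
      rw [map_sub, hk, hk, sub_eq_zero] at this
      exact Subtype.coe_injective this.symm
    have hker : ∀ q : Q', k q = 0 → q = 0 := by
      intro q hq
      set L : Set Q' := {x : Q' | ∃ s : S, k (x - j' s) = 0} with hL
      set f : Q' → Q' := fun x =>
        if h : ∃ s : S, k (x - j' s) = 0 then x - j' h.choose else 0 with hf
      have hfval : ∀ (x : Q') (s : S), k (x - j' s) = 0 → f x = x - j' s := by
        intro x s hs
        have hex : ∃ s : S, k (x - j' s) = 0 := ⟨s, hs⟩
        have : hex.choose = s := huniq _ _ x hex.choose_spec hs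
        simp only [hf, dif_pos hex, this]
      have hqL : q ∈ L := ⟨0, by simpa using hq⟩
      have := hdense.2 L
        (fun s => ⟨s, by simp⟩)
        (fun a ⟨s₁, h₁⟩ b ⟨s₂, h₂⟩ => ⟨s₁ + s₂, by
          have : a + b - j' (s₁ + s₂) = (a - j' s₁) + (b - j' s₂) := by
            rw [map_add]; abel
          rw [this, map_add, h₁, h₂, add_zero]⟩)
        (fun s a ⟨s₁, h₁⟩ => ⟨s * s₁, by
          have : j' s * a - j' (s * s₁) = j' s * (a - j' s₁) := by
            rw [map_mul, mul_sub]
          rw [this]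
          have h2 : k (j' s * (a - j' s₁)) = (s : T) * k (a - j' s₁) := k.map_smul s _
          rw [h2, h₁, mul_zero]⟩)
        f
        (fun a ⟨s₁, h₁⟩ b ⟨s₂, h₂⟩ => by
          have hab : k (a + b - j' (s₁ + s₂)) = 0 := by
            have : a + b - j' (s₁ + s₂) = (a - j' s₁) + (b - j' s₂) := by
              rw [map_add]; abel
            rw [this, map_add, h₁, h₂, add_zero]
          rw [hfval _ _ hab, hfval _ _ h₁, hfval _ _ h₂, map_add]; abel)
        (fun s a ⟨s₁, h₁⟩ => by
          have hsa : k (j' s * a - j' (s * s₁)) = 0 := by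
            have : j' s * a - j' (s * s₁) = j' s * (a - j' s₁) := by
              rw [map_mul, mul_sub]
            rw [this]
            have h2 : k (j' s * (a - j' s₁)) = (s : T) * k (a - j' s₁) := k.map_smul s _
            rw [h2, h₁, mul_zero]
          rw [hfval _ _ hsa, hfval _ _ h₁, map_mul, mul_sub])
        (fun s => by
          have : k (j' s - j' s) = 0 := by simp
          rw [hfval _ _ this, sub_self])
        q hqL
      have hq0 : k (q - j' 0) = 0 := by simpa using hq
      have := this
      rw [hfval q 0 hq0] at this
      simpa using this
    have kinj : Function.Injective k := by
      intro a b hab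
      have := hker (a - b) (by rw [map_sub, hab, sub_self])
      exact sub_eq_zero.mp this
    have hone : k 1 = 1 := by
      have : k (j' 1) = ((1 : S) : T) := hk 1
      simpa using this
    have hmul : ∀ x y : Q', k (x * y) = k x * k y := by
      intro x₀ y
      let h : Q' →ₗ[S] T :=
        { toFun := fun x => k (x * y) - k x * k y
          map_add' := fun a b => by
            show k ((a + b) * y) - k (a + b) * k y
              = (k (a * y) - k a * k y) + (k (b * y) - k b * k y)
            rw [add_mul, map_add, map_add, add_mul]; abel
          map_smul' := fun s a => by
            show k ((j' s * a) * y) - k (j' s * a) * k y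
              = (s : T) * (k (a * y) - k a * k y)
            rw [mul_assoc]
            have h1 : k (j' s * (a * y)) = (s : T) * k (a * y) := k.map_smul s _
            have h2 : k (j' s * a) = (s : T) * k a := k.map_smul s a
            rw [h1, h2, mul_sub, mul_assoc] }
      obtain ⟨G, hG⟩ := hinj.out k kinj h
      have hGS : ∀ s : S, G (s : T) = 0 := by
        intro s
        have h1 : G (k (j' s)) = h (j' s) := hG (j' s)
        rw [hk] at h1
        rw [h1]
        show k (j' s * y) - k (j' s) * k y = 0
        rw [hk]
        have h2 : k (j' s * y) = (s : T) * k y := k.map_smul s y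
        rw [h2, sub_self]
      have h3 := hvanish G hGS (k x₀)
      have h4 := hG x₀
      rw [h3] at h4
      exact sub_eq_zero.mp h4.symm
    refine ⟨{ toFun := k, map_one' := hone, map_mul' := hmul,
              map_zero' := k.map_zero, map_add' := k.map_add }, ?_⟩
    ext s
    exact hk s
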